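/- The constraint matrix of the system {θ^{ij}_t + γ^{ij}_{tk} + φ^i_k ≥ 0 : i ∈ I, j ∈ J, t ∈ T, k ∈ T, t ≤ k} (rows indexed by (i,j,t,k), columns by the variables θ^{ij}_t, γ^{ij}_{tk}, φ^i_k, each row having exactly three +1 entries) is totally unimodular. -/

import Mathlib

open Matrix

/-- The incidence matrix of the complete bipartite graph. -/
def bipM (X Y : Type*) [DecidableEq X] [DecidableEq Y] : Matrix (X × Y) (X ⊕ Y) ℚ :=
  Matrix.of (fun (p : X × Y) (c : X ⊕ Y) =>
    match c with
    | Sum.inl x => if x = p.1 then (1 : ℚ) else 0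
    | Sum.inr y => if y = p.2 then (1 : ℚ) else 0)

lemma bipM_inl {X Y : Type*} [DecidableEq X] [DecidableEq Y] (p : X × Y) (x : X) :
    bipM X Y p (Sum.inl x) = if x = p.1 then (1 : ℚ) else 0 := rfl

lemma bipM_inr {X Y : Type*} [DecidableEq X] [DecidableEq Y] (p : X × Y) (y : Y) :
    bipM X Y p (Sum.inr y) = if y = p.2 then (1 : ℚ) else 0 := rfl

/-- The incidence matrix of the complete bipartite graph is totally unimodular. -/
lemma bipartite_incidence_TU {X Y : Type*} [DecidableEq X] [DecidableEq Y] :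
    (bipM X Y).IsTotallyUnimodular := by
  intro k
  induction k with
  | zero => intro f g _ _; exact ⟨1, by simp⟩
  | succ k ih =>
    intro f g hf hg
    by_cases hfull : ∀ i, (∃ j, g j = Sum.inl (f i).1) ∧ (∃ j, g j = Sum.inr (f i).2)
    · -- all rows have two nonzero entries: the columns are linearly dependent
      refine ⟨0, ?_⟩
      rw [SignType.coe_zero]
      symm
      rw [← Matrix.exists_mulVec_eq_zero_iff]
      refine ⟨fun j => match g j with | Sum.inl _ => 1 | Sum.inr _ => -1, ?_, ?_⟩
      · intro h
        have h0 := congrFun h 0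
        revert h0
        cases g 0 <;> simp
      · have key : ∀ a : X ⊕ Y, (∃ j, g j = a) →
            ∑ j, (if g j = a then (1 : ℚ) else 0) = 1 := by
          rintro a ⟨j0, hj0⟩
          rw [Finset.sum_eq_single j0]
          · simp [hj0]
          · intro b _ hb
            have : g b ≠ a := fun h => hb (hg (h.trans hj0.symm))
            simp [this]
          · simp
        funext i
        have h1 := key _ (hfull i).1
        have h2 := key _ (hfull i).2
        have hterm : ∀ j, ((bipM X Y).submatrix f g) i j *
            (match g j with | Sum.inl _ => (1:ℚ) | Sum.inr _ => -1) =
            (if g j = Sum.inl (f i).1 then (1:ℚ) else 0)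
              - (if g j = Sum.inr (f i).2 then (1:ℚ) else 0) := by
          intro j
          rcases hgj : g j with x | y
          · rw [Matrix.submatrix_apply, hgj, bipM_inl]
            split_ifs with h <;> simp_all
          · rw [Matrix.submatrix_apply, hgj, bipM_inr]
            split_ifs with h <;> simp_all
        simp only [Matrix.mulVec, dotProduct, Pi.zero_apply]
        rw [Finset.sum_congr rfl (fun j _ => hterm j), Finset.sum_sub_distrib, h1, h2]
        ring
    · -- some row has at most one nonzero entry: expand along it
      push_neg at hfull
      have hone : ∃ (i : Fin (k+1)) (a : X ⊕ Y),
          ∀ j, ((bipM X Y).submatrix f g) i j = if g j = a then 1 else 0 := by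
        obtain ⟨i, hi⟩ := hfull
        by_cases hL : ∃ j, g j = Sum.inl (f i).1
        · have hR := hi hL
          refine ⟨i, Sum.inl (f i).1, fun j => ?_⟩
          rw [Matrix.submatrix_apply]
          rcases hgj : g j with x | y
          · rw [bipM_inl]
            by_cases h : x = (f i).1
            · rw [if_pos h, if_pos (by rw [h])]
            · rw [if_neg h, if_neg (fun hc => h (Sum.inl.inj hc))]
          · rw [bipM_inr]
            rw [if_neg (fun h => hR j (by rw [hgj, h])), if_neg (by simp)]
        · refine ⟨i, Sum.inr (f i).2, fun j => ?_⟩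
          rw [Matrix.submatrix_apply]
          rcases hgj : g j with x | y
          · rw [bipM_inl]
            rw [if_neg (fun h => hL ⟨j, by rw [hgj, h]⟩), if_neg (by simp)]
          · rw [bipM_inr]
            by_cases h : y = (f i).2
            · rw [if_pos h, if_pos (by rw [h])]
            · rw [if_neg h, if_neg (fun hc => h (Sum.inr.inj hc))]
      obtain ⟨i, a, hrow⟩ := hone
      rw [Matrix.det_succ_row _ i]
      by_cases hex : ∃ j0, g j0 = a
      · obtain ⟨j0, hj0⟩ := hex
        rw [Finset.sum_eq_single j0 (fun b _ hb => by
            have hb0 : (bipM X Y).submatrix f g i b = 0 := by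
              rw [hrow b, if_neg (fun h => hb (hg (h.trans hj0.symm)))]
            rw [hb0]; ring) (by simp)]
        rw [hrow j0, if_pos hj0, mul_one]
        change _ ∈ MonoidHom.mrange SignType.castHom.toMonoidHom
        refine mul_mem ?_ ?_
        · apply pow_mem
          exact ⟨-1, by simp⟩
        · exact ih _ _ (hf.comp Fin.succAbove_right_injective)
            (hg.comp Fin.succAbove_right_injective)
      · push_neg at hex
        refine ⟨0, ?_⟩
        rw [SignType.coe_zero]
        symm
        apply Finset.sum_eq_zero
        intro j _
        have hj : (bipM X Y).submatrix f g i j = 0 := by rw [hrow j, if_neg (hex j)]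
        rw [hj]; ring

/-- The constraint matrix of the system
`θ^{ij}_t + γ^{ij}_{tk} + φ^i_k ≥ 0` (rows indexed by quadruples `(i,j,t,k)` with
`t ≤ k`, columns by the variables `θ^{ij}_t`, `γ^{ij}_{tk}`, `φ^i_k`, each row having
exactly three `+1` entries) is totally unimodular. -/
theorem dual_constraint_matrix_totally_unimodular
    (NI NJ NT : ℕ) :
    letI R := {p : Fin NI × Fin NJ × Fin NT × Fin NT // p.2.2.1 ≤ p.2.2.2}
    letI A : Matrix R ((Fin NI × Fin NJ × Fin NT) ⊕ R ⊕ (Fin NI × Fin NT)) ℚ :=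
      fun r c =>
        match c with
        | Sum.inl (i, j, t) =>
            if r.1.1 = i ∧ r.1.2.1 = j ∧ r.1.2.2.1 = t then 1 else 0
        | Sum.inr (Sum.inl r') => if r' = r then 1 else 0
        | Sum.inr (Sum.inr (i, k)) => if r.1.1 = i ∧ r.1.2.2.2 = k then 1 else 0
    A.IsTotallyUnimodular := by
  set X := Fin NI × Fin NJ × Fin NT
  set Y := Fin NI × Fin NT
  set R := {p : Fin NI × Fin NJ × Fin NT × Fin NT // p.2.2.1 ≤ p.2.2.2}
  have hM := bipartite_incidence_TU (X := X) (Y := Y)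
  have hB := hM.submatrix
    (fun r : R => (((r.1.1, r.1.2.1, r.1.2.2.1) : X), ((r.1.1, r.1.2.2.2) : Y)))
    (id : X ⊕ Y → X ⊕ Y)
  have hBI := hB.fromCols_one
  have hA := hBI.submatrix (id : R → R)
      (Sum.elim (fun x : X => Sum.inl (Sum.inl x))
        (Sum.elim Sum.inr (fun y : Y => Sum.inl (Sum.inr y))))
  have key : ∀ B : Matrix R (X ⊕ R ⊕ Y) ℚ,
      B = (Matrix.fromCols
        ((bipM X Y).submatrix
            (fun r : R => (((r.1.1, r.1.2.1, r.1.2.2.1) : X), ((r.1.1, r.1.2.2.2) : Y)))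
            (id : X ⊕ Y → X ⊕ Y))
        (1 : Matrix R R ℚ)).submatrix (id : R → R)
      (Sum.elim (fun x : X => Sum.inl (Sum.inl x))
        (Sum.elim Sum.inr (fun y : Y => Sum.inl (Sum.inr y)))) →
      B.IsTotallyUnimodular := fun B hBe => hBe ▸ hA
  apply key
  funext r c
  rcases c with ⟨i, j, t⟩ | c'
  · show (if r.1.1 = i ∧ r.1.2.1 = j ∧ r.1.2.2.1 = t then (1:ℚ) else 0)
        = (if ((i, j, t) : X) = (r.1.1, r.1.2.1, r.1.2.2.1) then (1:ℚ) else 0)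
    refine if_congr ?_ rfl rfl
    simp only [Prod.ext_iff]
    tauto
  · rcases c' with r' | ⟨i, k⟩
    · show (if r' = r then (1:ℚ) else 0) = (1 : Matrix R R ℚ) r r'
      rw [Matrix.one_apply]
      exact if_congr eq_comm rfl rfl
    · show (if r.1.1 = i ∧ r.1.2.2.2 = k then (1:ℚ) else 0)
        = (if ((i, k) : Y) = (r.1.1, r.1.2.2.2) then (1:ℚ) else 0)
      refine if_congr ?_ rfl rfl
      simp only [Prod.ext_iff]
      tauto
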